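/- Let E be a real Banach lattice and let T : E → E be a positive bounded linear operator which is mean ergodic with mean ergodic projection 0 (the Cesàro means (1/n) · Σ_{k=0}^{n-1} T^k x converge in norm to 0 for every x ∈ E). Then the operator −T is also mean ergodic with mean ergodic projection 0, i.e. (1/n) · Σ_{k=0}^{n-1} (−T)^k x converges in norm to 0 for every x ∈ E. -/

import Mathlib

open Filter

/-- Let `E` be a real Banach lattice and `T : E → E` a positive bounded
linear operator which is mean ergodic with mean ergodic projection `0`. Then `-T` is
also mean ergodic with mean ergodic projection `0`. -/
theorem neg_mean_ergodic_of_mean_ergodic_projection_zero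
    (E : Type*) [NormedAddCommGroup E] [Lattice E] [HasSolidNorm E]
    [IsOrderedAddMonoid E] [NormedSpace ℝ E] [CompleteSpace E]
    [PosSMulStrictMono ℝ E]
    (T : E →L[ℝ] E)
    (hpos : ∀ x : E, 0 ≤ x → 0 ≤ T x)
    (hme : ∀ x : E,
      Tendsto (fun n : ℕ => (n : ℝ)⁻¹ • ∑ k ∈ Finset.range n, (T ^ k) x) atTop (nhds 0)) :
    ∀ x : E,
      Tendsto (fun n : ℕ => (n : ℝ)⁻¹ • ∑ k ∈ Finset.range n, ((-T) ^ k) x) atTop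
        (nhds 0) := by
  intro x
  have hmono : ∀ a b : E, a ≤ b → T a ≤ T b := by
    intro a b hab
    have h := hpos (b - a) (by simpa using hab)
    rw [map_sub] at h
    exact sub_nonneg.mp h
  have habsT : ∀ y : E, |T y| ≤ T |y| := by
    intro y
    rw [abs_le']
    refine ⟨hmono y |y| (le_abs_self y), ?_⟩
    have := hmono (-y) |y| (neg_le_abs y)
    rwa [map_neg] at this
  -- key pointwise estimate
  have key : ∀ k : ℕ, |((-T) ^ k) x| ≤ (T ^ k) |x| := by
    intro k
    induction k with
    | zero => simp
    | succ k ih =>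
      have e1 : ((-T) ^ (k + 1)) x = (-T) (((-T) ^ k) x) := by
        rw [pow_succ']; rfl
      have e2 : (T ^ (k + 1)) |x| = T ((T ^ k) |x|) := by
        rw [pow_succ']; rfl
      rw [e1, e2]
      have h1 : |(-T) (((-T) ^ k) x)| ≤ T |((-T) ^ k) x| := by
        have : (-T) (((-T) ^ k) x) = -(T (((-T) ^ k) x)) := rfl
        rw [this, abs_neg]
        exact habsT _
      exact h1.trans (hmono _ _ ih)
  -- norm estimate for Cesàro means
  have hnorm : ∀ n : ℕ,
      ‖(n : ℝ)⁻¹ • ∑ k ∈ Finset.range n, ((-T) ^ k) x‖ ≤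
      ‖(n : ℝ)⁻¹ • ∑ k ∈ Finset.range n, (T ^ k) |x|‖ := by
    intro n
    have hsum : |∑ k ∈ Finset.range n, ((-T) ^ k) x| ≤ ∑ k ∈ Finset.range n, (T ^ k) |x| := by
      induction n with
      | zero => simp
      | succ n ihn =>
        rw [Finset.sum_range_succ, Finset.sum_range_succ]
        exact (abs_add_le _ _).trans (add_le_add ihn (key n))
    have hsum0 : (0 : E) ≤ ∑ k ∈ Finset.range n, (T ^ k) |x| :=
      le_trans (abs_nonneg _) hsum
    have hle : ‖∑ k ∈ Finset.range n, ((-T) ^ k) x‖ ≤ ‖∑ k ∈ Finset.range n, (T ^ k) |x|‖ := by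
      apply norm_le_norm_of_abs_le_abs
      rwa [abs_of_nonneg hsum0]
    rw [norm_smul, norm_smul]
    exact mul_le_mul_of_nonneg_left hle (norm_nonneg _)
  rw [tendsto_zero_iff_norm_tendsto_zero]
  have h0 := hme |x|
  rw [tendsto_zero_iff_norm_tendsto_zero] at h0
  exact squeeze_zero (fun n => norm_nonneg _) hnorm h0
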